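/- arXiv:2011.09806 — 4 statements merged into one kernel-verified Lean document; each statement's English description precedes it below -/
import Mathlib

section
/- Let i, j, k, l be integers with 0 < i < k ≤ j < l, and set r = k − i, c = l − j; assume r < c < k. Then the following identity holds in ℚ(t): P_j·P_{l−i}/(P_i·P_{j−i}·P_{k−i}·P_{l−k}) = P_{l−j}·P_{k+j−i}/(P_{k−i}·P_{l+i−j−k}·P_k·P_{j−i}) + Σ_{s=1}^{min(k−i, k−c)} [ P_{k−c}·P_{l−j}·P_{k+j−i−s}/(P_s·P_{k−c−s}·P_{k−i−s}·P_{l+i−j−k+s}·P_k·P_{j−i−s}) ] · t^{2s(c−r+s)}. -/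
open Polynomial

/-- `hpoly α = 1 + t^2 + ⋯ + t^{2α}` for `α ≥ 0`. -/
noncomputable def hpoly (α : ℤ) : Polynomial ℚ :=
  ∑ m ∈ Finset.range (α.toNat + 1), X ^ (2 * m)

/-- `Ppoly 0 = 1` and `Ppoly α = hpoly 0 ⋯ hpoly (α-1)` for `α > 0`. -/
noncomputable def Ppoly (α : ℤ) : Polynomial ℚ :=
  ∏ m ∈ Finset.range α.toNat, hpoly (m : ℤ)

/-- The image of `hpoly α` in the field of rational functions `ℚ(t)`. -/
noncomputable def hQ (α : ℤ) : RatFunc ℚ :=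
  algebraMap (Polynomial ℚ) (RatFunc ℚ) (hpoly α)

/-- The image of `Ppoly α` in the field of rational functions `ℚ(t)`. -/
noncomputable def PQ (α : ℤ) : RatFunc ℚ :=
  algebraMap (Polynomial ℚ) (RatFunc ℚ) (Ppoly α)

/-- The variable `t` of `ℚ(t)`. -/
noncomputable def tQ : RatFunc ℚ := RatFunc.X


noncomputable def hp (a : ℕ) : Polynomial ℚ := ∑ m ∈ Finset.range (a + 1), X ^ (2 * m)

noncomputable def Pp (n : ℕ) : Polynomial ℚ := ∏ m ∈ Finset.range n, hp m

noncomputable def qb : ℕ → ℕ → Polynomial ℚ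
  | _, 0 => 1
  | 0, _ + 1 => 0
  | N + 1, k + 1 => qb N (k + 1) * X ^ (2 * (k + 1)) + qb N k

lemma qb_zero_right (N : ℕ) : qb N 0 = 1 := by cases N <;> rfl

lemma qb_succ (N k : ℕ) : qb (N + 1) (k + 1) = qb N (k + 1) * X ^ (2 * (k + 1)) + qb N k := rfl

lemma qb_eq_zero : ∀ {N k : ℕ}, N < k → qb N k = 0 := by
  intro N
  induction N with
  | zero => intro k h; match k, h with | k + 1, _ => rfl
  | succ N ih =>
    intro k h
    match k, h with
    | k + 1, h =>
      rw [qb_succ, ih (by omega), ih (by omega)]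
      simp

lemma qb_self (N : ℕ) : qb N N = 1 := by
  induction N with
  | zero => rfl
  | succ N ih => rw [qb_succ, qb_eq_zero (by omega), ih]; simp

lemma hp_ne_zero (a : ℕ) : hp a ≠ 0 := by
  intro h
  have h1 : (hp a).eval 1 = (a + 1 : ℚ) := by
    simp [hp, eval_finset_sum]
  rw [h] at h1
  simp at h1
  exact Nat.cast_add_one_ne_zero a h1.symm

lemma Pp_ne_zero (n : ℕ) : Pp n ≠ 0 := Finset.prod_ne_zero_iff.mpr fun m _ => hp_ne_zero m

lemma Pp_succ (n : ℕ) : Pp (n + 1) = Pp n * hp n := Finset.prod_range_succ _ _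

lemma hp_split (a b : ℕ) : hp (a + b + 1) = hp a + X ^ (2 * (a + 1)) * hp b := by
  unfold hp
  rw [show a + b + 1 + 1 = (a + 1) + (b + 1) from by omega, Finset.sum_range_add,
    Finset.mul_sum]
  congr 1
  refine Finset.sum_congr rfl fun i _ => ?_
  rw [← pow_add]
  ring_nf

lemma qb_mul_Pp : ∀ a b : ℕ, qb (a + b) a * (Pp a * Pp b) = Pp (a + b) := by
  intro a
  induction a with
  | zero => intro b; simp [qb_zero_right, Pp]
  | succ a iha =>
    intro b
    induction b with
    | zero => rw [qb_self, one_mul, show Pp 0 = 1 from rfl, mul_one]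
    | succ b ihb =>
      have e1 : a + 1 + (b + 1) = (a + 1 + b) + 1 := by omega
      rw [e1, qb_succ]
      have e2 : Pp (a + 1 + b + 1) = Pp (a + 1 + b) * hp (a + b + 1) := by
        rw [Pp_succ]; congr 2; omega
      have e3 : Pp (b + 1) = Pp b * hp b := Pp_succ b
      have e4 : Pp (a + 1) = Pp a * hp a := Pp_succ a
      have h1 : qb (a + 1 + b) (a + 1) * (Pp (a + 1) * Pp b) = Pp (a + 1 + b) := ihb
      have h2 : qb (a + (b + 1)) a * (Pp a * Pp (b + 1)) = Pp (a + (b + 1)) := iha (b + 1)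
      have e5 : a + (b + 1) = a + 1 + b := by omega
      rw [e5] at h2
      rw [e2, hp_split a b]
      calc (qb (a + 1 + b) (a + 1) * X ^ (2 * (a + 1)) + qb (a + 1 + b) a) *
            (Pp (a + 1) * Pp (b + 1))
          = (qb (a + 1 + b) (a + 1) * (Pp (a + 1) * Pp b)) * (X ^ (2 * (a + 1)) * hp b)
            + (qb (a + 1 + b) a * (Pp a * Pp (b + 1))) * hp a := by
            rw [e3, e4]; ring
        _ = Pp (a + 1 + b) * (hp a + X ^ (2 * (a + 1)) * hp b) := by rw [h1, h2]; ring

noncomputable def tQ' : RatFunc ℚ := RatFunc.X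

noncomputable def qbK (N k : ℕ) : RatFunc ℚ := algebraMap (Polynomial ℚ) (RatFunc ℚ) (qb N k)

noncomputable def PQn (n : ℕ) : RatFunc ℚ := algebraMap (Polynomial ℚ) (RatFunc ℚ) (Pp n)

lemma tQ_ne_zero : tQ' ≠ 0 := RatFunc.X_ne_zero

lemma PQn_ne_zero (n : ℕ) : PQn n ≠ 0 := by
  exact RatFunc.algebraMap_ne_zero (Pp_ne_zero n)

lemma algX : algebraMap (Polynomial ℚ) (RatFunc ℚ) X = tQ' := RatFunc.algebraMap_X

lemma qbK_zero_right (N : ℕ) : qbK N 0 = 1 := by simp [qbK, qb_zero_right]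

lemma qbK_self (N : ℕ) : qbK N N = 1 := by simp [qbK, qb_self]

lemma qbK_eq_zero {N k : ℕ} (h : N < k) : qbK N k = 0 := by simp [qbK, qb_eq_zero h]

lemma qbK_succ (N k : ℕ) :
    qbK (N + 1) (k + 1) = qbK N (k + 1) * tQ' ^ (2 * (k + 1) : ℤ) + qbK N k := by
  rw [qbK, qb_succ, map_add, map_mul, map_pow, algX, qbK, qbK]
  norm_cast

lemma qbK_mul_PQn (a b : ℕ) : qbK (a + b) a * (PQn a * PQn b) = PQn (a + b) := by
  rw [qbK, PQn, PQn, PQn, ← map_mul, ← map_mul, qb_mul_Pp]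

lemma trin (A n m : ℕ) (h : n ≤ A) :
    qbK A n * qbK (A - n + m) A = qbK (A - n + m) (A - n) * qbK m n := by
  rcases le_or_gt n m with hm | hm
  · have e1 : qbK A n * (PQn n * PQn (A - n)) = PQn A := by
      have := qbK_mul_PQn n (A - n)
      rwa [show n + (A - n) = A from by omega] at this
    have e2 : qbK (A - n + m) A * (PQn A * PQn (m - n)) = PQn (A - n + m) := by
      have := qbK_mul_PQn A (m - n)
      rwa [show A + (m - n) = A - n + m from by omega] at this
    have e3 : qbK (A - n + m) (A - n) * (PQn (A - n) * PQn m) = PQn (A - n + m) := by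
      have := qbK_mul_PQn (A - n) m
      rwa [show A - n + m = A - n + m from rfl] at this
    have e4 : qbK m n * (PQn n * PQn (m - n)) = PQn m := by
      have := qbK_mul_PQn n (m - n)
      rwa [show n + (m - n) = m from by omega] at this
    have hne : PQn n * PQn (A - n) * PQn (m - n) ≠ 0 :=
      mul_ne_zero (mul_ne_zero (PQn_ne_zero _) (PQn_ne_zero _)) (PQn_ne_zero _)
    apply mul_right_cancel₀ hne
    calc qbK A n * qbK (A - n + m) A * (PQn n * PQn (A - n) * PQn (m - n))
        = (qbK A n * (PQn n * PQn (A - n))) * (qbK (A - n + m) A * PQn (m - n)) := by ring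
      _ = qbK (A - n + m) A * (PQn A * PQn (m - n)) := by rw [e1]; ring
      _ = PQn (A - n + m) := e2
      _ = qbK (A - n + m) (A - n) * (PQn (A - n) * PQn m) := e3.symm
      _ = qbK (A - n + m) (A - n) * PQn (A - n) * (qbK m n * (PQn n * PQn (m - n))) := by
          rw [e4]; ring
      _ = qbK (A - n + m) (A - n) * qbK m n * (PQn n * PQn (A - n) * PQn (m - n)) := by ring
  · rw [qbK_eq_zero (show A - n + m < A from by omega), qbK_eq_zero hm]
    ring

noncomputable def TT (A C n m : ℕ) : RatFunc ℚ :=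
  ∑ s ∈ Finset.range (n + 1),
    qbK A s * qbK C (n - s) * qbK (A + C + m - s) (A + C) *
      tQ' ^ (2 * (s : ℤ) * ((C : ℤ) - (n : ℤ) + (s : ℤ)))

lemma TT_n0 (A C m : ℕ) : TT A C 0 m = qbK (A + C + m) (A + C) := by
  simp [TT, qbK_zero_right]

lemma TT_m0 (A C n : ℕ) (h : n ≤ A + C) : TT A C n 0 = qbK C n := by
  unfold TT
  rw [Finset.sum_eq_single 0]
  · simp [qbK_zero_right, qbK_self]
  · intro s hs hs0
    rcases Nat.exists_eq_succ_of_ne_zero hs0 with ⟨t, rfl⟩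
    have : A + C + 0 - (t + 1) < A + C := by
      have := Finset.mem_range.mp hs; omega
    rw [qbK_eq_zero this]
    ring
  · intro hs; simp at hs

lemma TT_C0 (A n m : ℕ) (h : n ≤ A) :
    TT A 0 n m = qbK (A - n + m) (A - n) * qbK m n := by
  unfold TT
  rw [Finset.sum_eq_single n]
  · rw [Nat.sub_self, qbK_zero_right,
      show 2 * (n : ℤ) * ((0 : ℕ) - (n : ℤ) + n) = 0 from by push_cast; ring, zpow_zero,
      show A + 0 + m - n = A - n + m from by omega]
    rw [mul_one, mul_one]
    exact trin A n m h
  · intro s hs hsn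
    have : (0 : ℕ) < n - s := by
      have := Finset.mem_range.mp hs; omega
    rw [qbK_eq_zero this]
    ring
  · intro hn; simp at hn

theorem saal : ∀ C m n A : ℕ, n ≤ A + C →
    TT A C n m = qbK (A + C - n + m) (A + C - n) * qbK (m + C) n := by
  intro C
  induction C with
  | zero =>
    intro m n A h
    rw [show A + 0 = A from rfl] at h ⊢
    rw [show m + 0 = m from rfl]
    exact TT_C0 A n m h
  | succ C ihC =>
    intro m
    induction m with
    | zero =>
      intro n A h
      rw [TT_m0 _ _ _ h, show A + (C + 1) - n + 0 = A + (C + 1) - n from rfl, qbK_self,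
        one_mul, Nat.zero_add]
    | succ m ihm =>
      intro n A h
      rcases n with _ | n
      · rw [TT_n0, Nat.sub_zero, qbK_zero_right, mul_one]
      -- main step
      have htQ : tQ' ≠ 0 := tQ_ne_zero
      have step1 : TT A (C+1) (n+1) (m+1) =
          tQ' ^ (2 * ((A+C : ℕ) + 1) : ℤ) * TT A (C+1) (n+1) m +
          ∑ s ∈ Finset.range (n+2),
            qbK A s * qbK (C+1) (n+1-s) * qbK (A+C+1+m-s) (A+C) *
              tQ' ^ (2 * (s:ℤ) * ((C:ℤ) - (n:ℤ) + (s:ℤ))) := by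
        unfold TT
        rw [Finset.mul_sum, ← Finset.sum_add_distrib]
        refine Finset.sum_congr rfl fun s hs => ?_
        have hs2 : s ≤ n + 1 := Nat.lt_succ_iff.mp (Finset.mem_range.mp hs)
        rw [show A + (C+1) + (m+1) - s = (A + C + 1 + m - s) + 1 from by omega,
          show A + (C+1) + m - s = A + C + 1 + m - s from by omega,
          show A + (C+1) = (A + C) + 1 from rfl,
          qbK_succ (A + C + 1 + m - s) (A + C),
          show 2 * (s:ℤ) * ((↑(C+1):ℤ) - (↑(n+1):ℤ) + (s:ℤ))
              = 2 * (s:ℤ) * ((C:ℤ) - (n:ℤ) + (s:ℤ)) from by push_cast; ring]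
        ring
      have step2 : (∑ s ∈ Finset.range (n+2),
            qbK A s * qbK (C+1) (n+1-s) * qbK (A+C+1+m-s) (A+C) *
              tQ' ^ (2 * (s:ℤ) * ((C:ℤ) - (n:ℤ) + (s:ℤ)))) =
          (∑ s ∈ Finset.range (n+2),
            qbK A s * qbK C (n+1-s) * qbK (A+C+1+m-s) (A+C) *
              (tQ' ^ (2 * (s:ℤ) * ((C:ℤ) - (n:ℤ) + (s:ℤ))) * tQ' ^ (2 * ((n:ℤ) + 1 - (s:ℤ))))) +
          (∑ s ∈ Finset.range (n+1),
            qbK A s * qbK C (n-s) * qbK (A+C+1+m-s) (A+C) *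
              tQ' ^ (2 * (s:ℤ) * ((C:ℤ) - (n:ℤ) + (s:ℤ)))) := by
        rw [Finset.sum_range_succ, Finset.sum_range_succ
          (f := fun s => qbK A s * qbK C (n+1-s) * qbK (A+C+1+m-s) (A+C) *
              (tQ' ^ (2 * (s:ℤ) * ((C:ℤ) - (n:ℤ) + (s:ℤ))) * tQ' ^ (2 * ((n:ℤ) + 1 - (s:ℤ)))))]
        have hlast : qbK A (n+1) * qbK (C+1) (n+1-(n+1)) * qbK (A+C+1+m-(n+1)) (A+C) *
              tQ' ^ (2 * ((n+1:ℕ):ℤ) * ((C:ℤ) - (n:ℤ) + ((n+1:ℕ):ℤ)))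
            = qbK A (n+1) * qbK C (n+1-(n+1)) * qbK (A+C+1+m-(n+1)) (A+C) *
              (tQ' ^ (2 * ((n+1:ℕ):ℤ) * ((C:ℤ) - (n:ℤ) + ((n+1:ℕ):ℤ))) *
               tQ' ^ (2 * ((n:ℤ) + 1 - ((n+1:ℕ):ℤ)))) := by
          rw [Nat.sub_self, qbK_zero_right, qbK_zero_right,
            show 2 * ((n:ℤ) + 1 - ((n+1:ℕ):ℤ)) = 0 from by push_cast; ring, zpow_zero]
          ring
        rw [hlast]
        conv_rhs => rw [add_right_comm]
        congr 1
        rw [← Finset.sum_add_distrib]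
        refine Finset.sum_congr rfl fun s hs => ?_
        have hs2 : s ≤ n := Nat.lt_succ_iff.mp (Finset.mem_range.mp hs)
        rw [show n + 1 - s = (n - s) + 1 from by omega,
          qbK_succ C (n - s),
          show 2 * ((n:ℤ) + 1 - (s:ℤ)) = (2 * ((n-s:ℕ) + 1) : ℤ) from by push_cast [hs2]; ring]
        ring
      have step3 : (∑ s ∈ Finset.range (n+1),
            qbK A s * qbK C (n-s) * qbK (A+C+1+m-s) (A+C) *
              tQ' ^ (2 * (s:ℤ) * ((C:ℤ) - (n:ℤ) + (s:ℤ)))) = TT A C n (m+1) := by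
        unfold TT
        refine Finset.sum_congr rfl fun s hs => ?_
        rw [show A + C + (m+1) - s = A + C + 1 + m - s from by omega]
      have ih1 : TT A (C+1) (n+1) m
          = qbK (A+C-n+m) (A+C-n) * qbK (m+C+1) (n+1) := by
        have := ihm (n+1) A h
        rwa [show A+(C+1)-(n+1) = A+C-n from by omega,
          show m+(C+1) = m+C+1 from rfl] at this
      have ih2 : TT A C n (m+1)
          = qbK (A+C-n+(m+1)) (A+C-n) * qbK (m+C+1) n := by
        have := ihC (m+1) n A (by omega)
        rwa [show m+1+C = m+C+1 from by omega] at this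
      rcases Nat.lt_or_ge n (A + C) with hcase | hcase
      · -- regular case : n + 1 ≤ A + C
        have step4 : (∑ s ∈ Finset.range (n+2),
              qbK A s * qbK C (n+1-s) * qbK (A+C+1+m-s) (A+C) *
                (tQ' ^ (2 * (s:ℤ) * ((C:ℤ) - (n:ℤ) + (s:ℤ))) * tQ' ^ (2 * ((n:ℤ) + 1 - (s:ℤ)))))
            = tQ' ^ (2 * ((n:ℤ) + 1)) * TT A C (n+1) (m+1) := by
          unfold TT
          rw [Finset.mul_sum]
          refine Finset.sum_congr rfl fun s hs => ?_
          rw [show A + C + (m+1) - s = A + C + 1 + m - s from by omega,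
            ← zpow_add₀ htQ,
            show 2 * (s:ℤ) * ((C:ℤ) - (n:ℤ) + (s:ℤ)) + 2 * ((n:ℤ) + 1 - (s:ℤ))
              = 2 * ((n:ℤ) + 1) + 2 * (s:ℤ) * ((C:ℤ) - ((n+1:ℕ):ℤ) + (s:ℤ)) from by
                push_cast; ring,
            zpow_add₀ htQ]
          ring
        have ih3 : TT A C (n+1) (m+1)
            = qbK (A+C-n-1+(m+1)) (A+C-n-1) * qbK (m+C+1) (n+1) := by
          have := ihC (m+1) (n+1) A (by omega)
          rwa [show A+C-(n+1) = A+C-n-1 from by omega,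
            show m+1+C = m+C+1 from by omega] at this
        rw [step1, step2, step3, step4, ih1, ih2, ih3]
        rw [show A+C-n-1+(m+1) = A+C-n+m from by omega]
        have pB : qbK (A+C-n+(m+1)) (A+C-n)
            = qbK (A+C-n+m) (A+C-n) * tQ' ^ (2 * ((A+C-n-1 : ℕ) + 1) : ℤ)
              + qbK (A+C-n+m) (A+C-n-1) := by
          have h2 := qbK_succ (A+C-n+m) (A+C-n-1)
          rwa [show A+C-n+m+1 = A+C-n+(m+1) from by omega,
            show A+C-n-1+1 = A+C-n from by omega] at h2
        have pR : qbK (m+1+(C+1)) (n+1)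
            = qbK (m+C+1) (n+1) * tQ' ^ (2 * ((n : ℕ) + 1) : ℤ) + qbK (m+C+1) n := by
          have h2 := qbK_succ (m+C+1) n
          rwa [show m+C+1+1 = m+1+(C+1) from by omega] at h2
        have hsplit : tQ' ^ (2 * (((A+C:ℕ)):ℤ) + 2)
            = tQ' ^ (2 * ((n : ℕ) + 1) : ℤ) * tQ' ^ (2 * ((A+C-n-1 : ℕ) + 1) : ℤ) := by
          rw [← zpow_add₀ htQ]
          congr 1
          omega
        rw [show A+(C+1)-(n+1)+(m+1) = A+C-n+(m+1) from by omega,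
          show A+(C+1)-(n+1) = A+C-n from by omega,
          pB, pR,
          show (2 * (((A+C:ℕ):ℤ) + 1)) = 2 * ((A+C:ℕ):ℤ) + 2 from by ring,
          hsplit]
        ring
      · -- boundary case : n = A + C
        have hn : n = A + C := by omega
        have step4' : (∑ s ∈ Finset.range (n+2),
              qbK A s * qbK C (n+1-s) * qbK (A+C+1+m-s) (A+C) *
                (tQ' ^ (2 * (s:ℤ) * ((C:ℤ) - (n:ℤ) + (s:ℤ))) * tQ' ^ (2 * ((n:ℤ) + 1 - (s:ℤ)))))
            = 0 := by
          refine Finset.sum_eq_zero fun s hs => ?_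
          rcases Nat.lt_or_ge A s with h1 | h1
          · rw [qbK_eq_zero h1]; ring
          · rw [qbK_eq_zero (show C < n+1-s from by omega)]; ring
        rw [step1, step2, step3, step4', ih1, ih2]
        rw [show A+C-n+(m+1) = m+1 from by omega, show A+C-n+m = m from by omega,
          show A+C-n = 0 from by omega,
          show A+(C+1)-(n+1)+(m+1) = m+1 from by omega,
          show A+(C+1)-(n+1) = 0 from by omega]
        simp only [qbK_zero_right, one_mul, mul_one]
        have pR : qbK (m+1+(C+1)) (n+1)
            = qbK (m+C+1) (n+1) * tQ' ^ (2 * ((n : ℕ) + 1) : ℤ) + qbK (m+C+1) n := by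
          have h2 := qbK_succ (m+C+1) n
          rwa [show m+C+1+1 = m+1+(C+1) from by omega] at h2
        rw [pR, show (2 * (((A+C:ℕ):ℤ) + 1)) = 2 * ((n:ℤ) + 1) from by omega]
        ring

lemma sum_cast_Icc (M : ℕ) (g : ℤ → RatFunc ℚ) :
    ∑ s ∈ Finset.Icc (1:ℤ) (M:ℤ), g s = ∑ s ∈ Finset.Icc (1:ℕ) M, g (s:ℤ) := by
  refine Finset.sum_nbij' (i := fun s => s.toNat) (j := fun s => (s:ℤ)) ?_ ?_ ?_ ?_ ?_
  · intro a ha; simp only [Finset.mem_Icc] at ha ⊢; omega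
  · intro a ha; simp only [Finset.mem_Icc] at ha ⊢; omega
  · intro a ha; simp only [Finset.mem_Icc] at ha; omega
  · intro a ha; simp only [Finset.mem_Icc] at ha; omega
  · intro a ha; simp only [Finset.mem_Icc] at ha
    congr 1
    omega

lemma tQ_eq : tQ = tQ' := rfl

lemma hpoly_natCast (m : ℕ) : hpoly (m : ℤ) = hp m := by
  unfold hpoly hp
  norm_num

lemma PQ_natCast (x : ℕ) : PQ (x : ℤ) = PQn x := by
  unfold PQ PQn Ppoly Pp
  rw [Int.toNat_natCast]
  rw [Finset.prod_congr rfl fun m _ => hpoly_natCast m]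


/-- The global polynomial identity (Theorem 4.2). -/
theorem global_polynomial_identity
    (i j k l r c : ℤ)
    (hi : 0 < i) (hik : i < k) (hkj : k ≤ j) (hjl : j < l)
    (hr : r = k - i) (hc : c = l - j) (hrc : r < c) (hck : c < k) :
    PQ j * PQ (l - i) / (PQ i * PQ (j - i) * PQ (k - i) * PQ (l - k)) =
      PQ (l - j) * PQ (k + j - i) /
        (PQ (k - i) * PQ (l + i - j - k) * PQ k * PQ (j - i)) +
      ∑ s ∈ Finset.Icc 1 (min (k - i) (k - c)),
        PQ (k - c) * PQ (l - j) * PQ (k + j - i - s) /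
          (PQ s * PQ (k - c - s) * PQ (k - i - s) * PQ (l + i - j - k + s) *
            PQ k * PQ (j - i - s)) *
          tQ ^ (2 * s * (c - r + s)).toNat := by
  obtain ⟨i₀, hi₀⟩ : ∃ x : ℕ, (x:ℤ) = i := ⟨i.toNat, Int.toNat_of_nonneg (by omega)⟩
  obtain ⟨n₀, hn₀⟩ : ∃ x : ℕ, (x:ℤ) = k - i := ⟨(k-i).toNat, Int.toNat_of_nonneg (by omega)⟩
  obtain ⟨m₀, hm₀⟩ : ∃ x : ℕ, (x:ℤ) = j - i := ⟨(j-i).toNat, Int.toNat_of_nonneg (by omega)⟩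
  obtain ⟨C₀, hC₀⟩ : ∃ x : ℕ, (x:ℤ) = l - j := ⟨(l-j).toNat, Int.toNat_of_nonneg (by omega)⟩
  obtain ⟨A₀, hA₀⟩ : ∃ x : ℕ, (x:ℤ) = k - c := ⟨(k-c).toNat, Int.toNat_of_nonneg (by omega)⟩
  have key := saal C₀ m₀ n₀ A₀ (by omega)
  rw [show A₀+C₀-n₀+m₀ = i₀+m₀ from by omega, show A₀+C₀-n₀ = i₀ from by omega] at key
  have hL : PQ j * PQ (l - i) / (PQ i * PQ (j - i) * PQ (k - i) * PQ (l - k))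
      = qbK (i₀+m₀) i₀ * qbK (m₀+C₀) n₀ := by
    rw [show j - i = ((m₀:ℕ):ℤ) from by omega,
      show l - i = ((m₀+C₀:ℕ):ℤ) from by push_cast; omega,
      show k - i = ((n₀:ℕ):ℤ) from by omega,
      show l - k = ((m₀+C₀-n₀:ℕ):ℤ) from by omega,
      show j = ((i₀+m₀:ℕ):ℤ) from by push_cast; omega,
      show i = ((i₀:ℕ):ℤ) from by omega]
    simp only [PQ_natCast]
    rw [div_eq_iff (by
      exact mul_ne_zero (mul_ne_zero (mul_ne_zero (PQn_ne_zero _) (PQn_ne_zero _))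
        (PQn_ne_zero _)) (PQn_ne_zero _))]
    have q1 := qbK_mul_PQn i₀ m₀
    have q2 := qbK_mul_PQn n₀ (m₀+C₀-n₀)
    rw [show n₀+(m₀+C₀-n₀) = m₀+C₀ from by omega] at q2
    rw [← q1, ← q2]
    ring
  have hR0 : PQ (l - j) * PQ (k + j - i) /
        (PQ (k - i) * PQ (l + i - j - k) * PQ k * PQ (j - i))
      = qbK C₀ n₀ * qbK (A₀+C₀+m₀) (A₀+C₀) := by
    rw [show k + j - i = ((A₀+C₀+m₀:ℕ):ℤ) from by push_cast; omega,
      show l + i - j - k = ((C₀-n₀:ℕ):ℤ) from by omega,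
      show l - j = ((C₀:ℕ):ℤ) from by omega,
      show k - i = ((n₀:ℕ):ℤ) from by omega,
      show j - i = ((m₀:ℕ):ℤ) from by omega,
      show k = ((A₀+C₀:ℕ):ℤ) from by push_cast; omega]
    simp only [PQ_natCast]
    rw [div_eq_iff (by
      exact mul_ne_zero (mul_ne_zero (mul_ne_zero (PQn_ne_zero _) (PQn_ne_zero _))
        (PQn_ne_zero _)) (PQn_ne_zero _))]
    have q1 := qbK_mul_PQn n₀ (C₀-n₀)
    rw [show n₀+(C₀-n₀) = C₀ from by omega] at q1
    have q2 := qbK_mul_PQn (A₀+C₀) m₀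
    rw [← q1, ← q2]
    ring
  rw [hL, ← key]
  unfold TT
  rw [Finset.range_eq_Ico, Finset.sum_eq_sum_Ico_succ_bot (by omega : 0 < n₀+1)]
  congr 1
  · rw [hR0]
    simp only [Nat.sub_zero, qbK_zero_right, one_mul, Nat.cast_zero]
    rw [show 2 * (0:ℤ) * ((C₀:ℤ) - (n₀:ℤ) + 0) = 0 from by ring, zpow_zero, mul_one]
  · rw [Finset.Ico_add_one_right_eq_Icc,
      show min (k - i) (k - c) = ((min n₀ A₀ : ℕ):ℤ) from by push_cast; omega,
      sum_cast_Icc]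
    rw [← Finset.sum_subset (Finset.Icc_subset_Icc_right (min_le_left n₀ A₀))
      (fun s hs hns => by
        have h1 : A₀ < s := by
          simp only [Finset.mem_Icc] at hs hns
          omega
        rw [qbK_eq_zero h1]
        ring)]
    refine Finset.sum_congr rfl fun s₀ hs₀ => ?_
    have hb : 1 ≤ s₀ ∧ s₀ ≤ n₀ ∧ s₀ ≤ A₀ := by
      simp only [Finset.mem_Icc] at hs₀; omega
    obtain ⟨hb1, hb2, hb3⟩ := hb
    rw [show k + j - i - (s₀:ℤ) = ((A₀+C₀+m₀-s₀:ℕ):ℤ) from by omega,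
      show k - c - (s₀:ℤ) = ((A₀-s₀:ℕ):ℤ) from by omega,
      show k - i - (s₀:ℤ) = ((n₀-s₀:ℕ):ℤ) from by omega,
      show l + i - j - k + (s₀:ℤ) = ((C₀-n₀+s₀:ℕ):ℤ) from by omega,
      show j - i - (s₀:ℤ) = ((m₀-s₀:ℕ):ℤ) from by omega,
      show l - j = ((C₀:ℕ):ℤ) from by omega,
      show k - c = ((A₀:ℕ):ℤ) from by omega,
      show k = ((A₀+C₀:ℕ):ℤ) from by push_cast; omega,
      show c - r + (s₀:ℤ) = ((C₀-n₀+s₀:ℕ):ℤ) from by omega]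
    simp only [PQ_natCast]
    rw [show (2 * (s₀:ℤ) * ((C₀-n₀+s₀:ℕ):ℤ)) = ((2*s₀*(C₀-n₀+s₀) : ℕ):ℤ) from by
        push_cast; ring,
      Int.toNat_natCast, tQ_eq,
      show tQ' ^ (2*s₀*(C₀-n₀+s₀)) = tQ' ^ ((2*s₀*(C₀-n₀+s₀) : ℕ):ℤ) from
        (zpow_natCast tQ' _).symm,
      show ((2*s₀*(C₀-n₀+s₀) : ℕ):ℤ) = 2 * (s₀:ℤ) * ((C₀:ℤ) - (n₀:ℤ) + (s₀:ℤ)) from by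
        have hcn : ((C₀-n₀+s₀:ℕ):ℤ) = (C₀:ℤ) - (n₀:ℤ) + (s₀:ℤ) := by omega
        push_cast [← hcn]
        ring]
    have hq : PQn A₀ * PQn C₀ * PQn (A₀+C₀+m₀-s₀) /
        (PQn s₀ * PQn (A₀-s₀) * PQn (n₀-s₀) * PQn (C₀-n₀+s₀) * PQn (A₀+C₀) * PQn (m₀-s₀))
        = qbK A₀ s₀ * qbK C₀ (n₀-s₀) * qbK (A₀+C₀+m₀-s₀) (A₀+C₀) := by
      rw [div_eq_iff (by
        exact mul_ne_zero (mul_ne_zero (mul_ne_zero (mul_ne_zero (mul_ne_zero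
          (PQn_ne_zero _) (PQn_ne_zero _)) (PQn_ne_zero _)) (PQn_ne_zero _))
          (PQn_ne_zero _)) (PQn_ne_zero _))]
      have q1 := qbK_mul_PQn s₀ (A₀-s₀)
      rw [show s₀+(A₀-s₀) = A₀ from by omega] at q1
      have q2 := qbK_mul_PQn (n₀-s₀) (C₀-n₀+s₀)
      rw [show (n₀-s₀)+(C₀-n₀+s₀) = C₀ from by omega] at q2
      have q3 := qbK_mul_PQn (A₀+C₀) (m₀-s₀)
      rw [show (A₀+C₀)+(m₀-s₀) = A₀+C₀+m₀-s₀ from by omega] at q3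
      rw [← q1, ← q2, ← q3]
      ring
    rw [hq]
end

section
/- For all integers i, j with i ≥ 3 and j ≥ i + 2 the following identity holds in ℚ(t): h_{j+1−i}·h_{j+2−i}·h_i·h_{i+1}/(h_j·h_{j+1}·h_1·h_2) − t^4·h_1·h_{i−2}·h_{j−i−1}/(h_{j+1}·h_1) − t^{12}·h_{i−3}·h_{i−2}·h_{j−i−2}·h_{j−i−1}/(h_1·h_2·h_j·h_{j+1}) = 1. -/
open Polynomial

lemma hpoly_ne_zero (α : ℤ) : hpoly α ≠ 0 := by
  intro h
  have := congrArg (Polynomial.eval 1) h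
  simp [hpoly, Polynomial.eval_finset_sum] at this
  exact_mod_cast this

lemma hQ_ne_zero (α : ℤ) : hQ α ≠ 0 := by
  simpa [hQ] using hpoly_ne_zero α

lemma tQ_eq_s6 : tQ = algebraMap (Polynomial ℚ) (RatFunc ℚ) X := by
  simp [tQ]

lemma hQ_mul (n : ℕ) : hQ (n : ℤ) * (tQ ^ 2 - 1) = tQ ^ (2 * n + 2) - 1 := by
  have h1 : hpoly (n : ℤ) * (X ^ 2 - 1) = (X : Polynomial ℚ) ^ (2 * n + 2) - 1 := by
    have := geom_sum_mul ((X : Polynomial ℚ) ^ 2) (n + 1)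
    simp only [hpoly, Int.toNat_natCast]
    rw [show (∑ m ∈ Finset.range (n+1), (X : Polynomial ℚ) ^ (2*m)) =
        ∑ m ∈ Finset.range (n+1), ((X : Polynomial ℚ)^2) ^ m by
      refine Finset.sum_congr rfl fun m _ => ?_; rw [pow_mul]]
    rw [this, ← pow_mul]
    ring_nf
  have := congrArg (algebraMap (Polynomial ℚ) (RatFunc ℚ)) h1
  simpa [hQ, tQ_eq_s6, map_mul, map_sub, map_pow] using this

lemma tsq_ne : (tQ ^ 2 - 1 : RatFunc ℚ) ≠ 0 := by
  have : ((X : Polynomial ℚ) ^ 2 - 1) ≠ 0 := by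
    intro h
    have := congrArg (Polynomial.eval 0) h
    simp at this
  rw [tQ_eq_s6, ← map_pow, ← map_one (algebraMap (Polynomial ℚ) (RatFunc ℚ)), ← map_sub]
  exact RatFunc.algebraMap_ne_zero this


lemma q_ne (n : ℕ) : tQ ^ (2 * n + 2) - 1 ≠ 0 := by
  rw [← hQ_mul n]
  exact mul_ne_zero (hQ_ne_zero _) tsq_ne

lemma hQ_div (n : ℕ) : hQ (n : ℤ) = (tQ ^ (2 * n + 2) - 1) / (tQ ^ 2 - 1) :=
  (eq_div_iff tsq_ne).2 (hQ_mul n)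

lemma qq {K : Type*} [Field K] {d1 d2 : K} (h1 : d1 ≠ 0) (h2 : d2 ≠ 0) (n m : K) :
    n / d1 / (m / d2) = n * d2 / (d1 * m) := by
  rcases eq_or_ne m 0 with h | h
  · simp [h]
  · field_simp

set_option maxHeartbeats 1000000 in
lemma key (x A B : RatFunc ℚ) (e2 : x ^ 2 - 1 ≠ 0) (e4 : x ^ 4 - 1 ≠ 0)
    (e6 : x ^ 6 - 1 ≠ 0) (e12 : A * (B * x ^ 12) - 1 ≠ 0)
    (e14 : A * (B * x ^ 14) - 1 ≠ 0) :
    (B * x ^ 8 - 1) / (x ^ 2 - 1) * ((B * x ^ 10 - 1) / (x ^ 2 - 1)) *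
        ((A * x ^ 8 - 1) / (x ^ 2 - 1)) * ((A * x ^ 10 - 1) / (x ^ 2 - 1)) /
        ((A * (B * x ^ 12) - 1) / (x ^ 2 - 1) * ((A * (B * x ^ 14) - 1) / (x ^ 2 - 1)) *
          ((x ^ 4 - 1) / (x ^ 2 - 1)) * ((x ^ 6 - 1) / (x ^ 2 - 1))) -
      x ^ 4 * ((x ^ 4 - 1) / (x ^ 2 - 1)) * ((A * x ^ 4 - 1) / (x ^ 2 - 1)) *
        ((B * x ^ 4 - 1) / (x ^ 2 - 1)) /
        ((A * (B * x ^ 14) - 1) / (x ^ 2 - 1) * ((x ^ 4 - 1) / (x ^ 2 - 1))) -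
      x ^ 12 * ((A * x ^ 2 - 1) / (x ^ 2 - 1)) * ((A * x ^ 4 - 1) / (x ^ 2 - 1)) *
        ((B * x ^ 2 - 1) / (x ^ 2 - 1)) * ((B * x ^ 4 - 1) / (x ^ 2 - 1)) /
        ((x ^ 4 - 1) / (x ^ 2 - 1) * ((x ^ 6 - 1) / (x ^ 2 - 1)) *
          ((A * (B * x ^ 12) - 1) / (x ^ 2 - 1)) * ((A * (B * x ^ 14) - 1) / (x ^ 2 - 1))) = 1 := by
  simp only [div_mul_eq_mul_div, mul_div_assoc', div_div, div_div_eq_mul_div]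
  rw [div_sub_div _ _ ?d1 ?d2, div_sub_div _ _ ?d3 ?d4, div_eq_one_iff_eq ?d5]
  case d1 => repeat first | apply mul_ne_zero | assumption
  case d2 => repeat first | apply mul_ne_zero | assumption
  case d3 => repeat first | apply mul_ne_zero | assumption
  case d4 => repeat first | apply mul_ne_zero | assumption
  case d5 => repeat first | apply mul_ne_zero | assumption
  ring

/-- The claim `F(i,j,3) = 1` of the Appendix. -/
theorem F_i_j_three_eq_one (i j : ℤ) (hi : 3 ≤ i) (hj : j ≥ i + 2) :
    hQ (j + 1 - i) * hQ (j + 2 - i) * hQ i * hQ (i + 1) /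
        (hQ j * hQ (j + 1) * hQ 1 * hQ 2) -
      tQ ^ 4 * hQ 1 * hQ (i - 2) * hQ (j - i - 1) / (hQ (j + 1) * hQ 1) -
      tQ ^ 12 * hQ (i - 3) * hQ (i - 2) * hQ (j - i - 2) * hQ (j - i - 1) /
        (hQ 1 * hQ 2 * hQ j * hQ (j + 1)) = 1 := by
  obtain ⟨a, ha⟩ := Int.le.dest hi
  obtain ⟨b, hb⟩ := Int.le.dest hj
  rw [show j + 1 - i = ((b + 3 : ℕ) : ℤ) by omega,
      show j + 2 - i = ((b + 4 : ℕ) : ℤ) by omega,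
      show j - i - 1 = ((b + 1 : ℕ) : ℤ) by omega,
      show j - i - 2 = ((b : ℕ) : ℤ) by omega,
      show i + 1 = ((a + 4 : ℕ) : ℤ) by omega,
      show i - 2 = ((a + 1 : ℕ) : ℤ) by omega,
      show i - 3 = ((a : ℕ) : ℤ) by omega,
      show j + 1 = ((a + b + 6 : ℕ) : ℤ) by omega,
      show i = ((a + 3 : ℕ) : ℤ) by omega,
      show j = ((a + b + 5 : ℕ) : ℤ) by omega,
      show (1 : ℤ) = ((1 : ℕ) : ℤ) from rfl,
      show (2 : ℤ) = ((2 : ℕ) : ℤ) from rfl]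
  simp only [hQ_div]
  rw [show 2 * (b + 3) + 2 = 2 * b + 8 by ring,
      show 2 * (b + 4) + 2 = 2 * b + 10 by ring,
      show 2 * (b + 1) + 2 = 2 * b + 4 by ring,
      show 2 * (a + 3) + 2 = 2 * a + 8 by ring,
      show 2 * (a + 4) + 2 = 2 * a + 10 by ring,
      show 2 * (a + 1) + 2 = 2 * a + 4 by ring,
      show 2 * (a + b + 5) + 2 = 2 * a + (2 * b + 12) by ring,
      show 2 * (a + b + 6) + 2 = 2 * a + (2 * b + 14) by ring,
      show 2 * 1 + 2 = 4 by norm_num,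
      show 2 * 2 + 2 = 6 by norm_num]
  have h1 : tQ ^ (2 * a) * (tQ ^ (2 * b) * tQ ^ 12) - 1 ≠ 0 := by
    rw [← pow_add, ← pow_add, show 2 * a + (2 * b + 12) = 2 * (a + b + 5) + 2 by ring]
    exact q_ne (a + b + 5)
  have h2 : tQ ^ (2 * a) * (tQ ^ (2 * b) * tQ ^ 14) - 1 ≠ 0 := by
    rw [← pow_add, ← pow_add, show 2 * a + (2 * b + 14) = 2 * (a + b + 6) + 2 by ring]
    exact q_ne (a + b + 6)
  have h3 : (tQ : RatFunc ℚ) ^ 4 - 1 ≠ 0 := by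
    have := q_ne 1; norm_num at this ⊢; exact this
  have h4 : (tQ : RatFunc ℚ) ^ 6 - 1 ≠ 0 := by
    have := q_ne 2; norm_num at this ⊢; exact this
  simp only [pow_add]
  exact key tQ (tQ ^ (2 * a)) (tQ ^ (2 * b)) tsq_ne h3 h4 h1 h2
end

section
/- For integers i, j, r with i ≥ 2, j ≥ i + 2 and r ≥ 2, define FF(i,j,r) ∈ ℚ(t) by FF(i,j,r) := h_{j−1}·h_{j−2}·h_{r+i−1}·h_{r+i−2}/(h_{i−1}·h_{i−2}·h_{r+j−1}·h_{r+j−2}) − t^{2(i−1)}·h_{r−1}·h_1·h_{j−i−1}/(h_{r+j−1}·h_{i−2}) − t^{4i}·h_{r−2}·h_{r−1}·h_{j−i−2}·h_{j−i−1}/(h_{r+j−2}·h_{r+j−1}·h_{i−2}·h_{i−1}). Then FF(i,j,r) = 1. -/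
open Polynomial

/-- `FF(i,j,r)`: the reduced form of identity (5.4) of the Appendix. -/
noncomputable def FFfun (i j r : ℤ) : RatFunc ℚ :=
  hQ (j - 1) * hQ (j - 2) * hQ (r + i - 1) * hQ (r + i - 2) /
      (hQ (i - 1) * hQ (i - 2) * hQ (r + j - 1) * hQ (r + j - 2)) -
    tQ ^ (2 * (i - 1)).toNat * hQ (r - 1) * hQ 1 * hQ (j - i - 1) /
      (hQ (r + j - 1) * hQ (i - 2)) -
    tQ ^ (4 * i).toNat * hQ (r - 2) * hQ (r - 1) * hQ (j - i - 2) *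
        hQ (j - i - 1) /
      (hQ (r + j - 2) * hQ (r + j - 1) * hQ (i - 2) * hQ (i - 1))

private lemma comb4 {K : Type*} [Field K] {d f g h k a b c e : K} (hd : d ≠ 0)
    (hf : f ≠ 0) (hg : g ≠ 0) (hh : h ≠ 0) (hk : k ≠ 0) :
    a / d * (b / d) * (c / d) * (e / d) / (f / d * (g / d) * (h / d) * (k / d)) =
      a * b * c * e / (f * g * h * k) := by
  field_simp

private lemma comb3 {K : Type*} [Field K] {d f g w a b c : K} (hd : d ≠ 0)
    (hf : f ≠ 0) (hg : g ≠ 0) :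
    w * (a / d) * (b / d) * (c / d) / (f / d * (g / d)) =
      w * a * b * c / (d * (f * g)) := by
  field_simp

private lemma comb5 {K : Type*} [Field K] {d f g h k w a b c e : K} (hd : d ≠ 0)
    (hf : f ≠ 0) (hg : g ≠ 0) (hh : h ≠ 0) (hk : k ≠ 0) :
    w * (a / d) * (b / d) * (c / d) * (e / d) / (f / d * (g / d) * (h / d) * (k / d)) =
      w * a * b * c * e / (f * g * h * k) := by
  field_simp

set_option maxHeartbeats 4000000 in
private lemma keyM {K : Type*} [Field K] (y : K) (p q s : ℕ)
    (h0 : y - 1 ≠ 0) (h1 : y ^ (p + 1) - 1 ≠ 0) (h2 : y ^ (p + 2) - 1 ≠ 0)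
    (h3 : y ^ (p + q + s + 5) - 1 ≠ 0) (h4 : y ^ (p + q + s + 6) - 1 ≠ 0) :
    (y ^ (p + q + 4) - 1) / (y - 1) * ((y ^ (p + q + 3) - 1) / (y - 1)) *
          ((y ^ (p + s + 4) - 1) / (y - 1)) * ((y ^ (p + s + 3) - 1) / (y - 1)) /
        ((y ^ (p + 2) - 1) / (y - 1) * ((y ^ (p + 1) - 1) / (y - 1)) *
          ((y ^ (p + q + s + 6) - 1) / (y - 1)) * ((y ^ (p + q + s + 5) - 1) / (y - 1))) -
      y ^ (p + 1) * ((y ^ (s + 2) - 1) / (y - 1)) * ((y ^ 2 - 1) / (y - 1)) *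
          ((y ^ (q + 2) - 1) / (y - 1)) /
        ((y ^ (p + q + s + 6) - 1) / (y - 1) * ((y ^ (p + 1) - 1) / (y - 1))) -
      y ^ (2 * p + 4) * ((y ^ (s + 1) - 1) / (y - 1)) * ((y ^ (s + 2) - 1) / (y - 1)) *
          ((y ^ (q + 1) - 1) / (y - 1)) * ((y ^ (q + 2) - 1) / (y - 1)) /
        ((y ^ (p + q + s + 5) - 1) / (y - 1) * ((y ^ (p + q + s + 6) - 1) / (y - 1)) *
          ((y ^ (p + 1) - 1) / (y - 1)) * ((y ^ (p + 2) - 1) / (y - 1))) = 1 := by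
  rw [comb4 h0 h2 h1 h4 h3, comb3 h0 h4 h1, comb5 h0 h3 h4 h1 h2]
  have hd1 : (y ^ (p + 2) - 1) * (y ^ (p + 1) - 1) * (y ^ (p + q + s + 6) - 1) * (y ^ (p + q + s + 5) - 1) ≠ 0 :=
    mul_ne_zero (mul_ne_zero (mul_ne_zero h2 h1) h4) h3
  have hd2 : (y - 1) * ((y ^ (p + q + s + 6) - 1) * (y ^ (p + 1) - 1)) ≠ 0 :=
    mul_ne_zero h0 (mul_ne_zero h4 h1)
  have hd3 : (y ^ (p + q + s + 5) - 1) * (y ^ (p + q + s + 6) - 1) * (y ^ (p + 1) - 1) * (y ^ (p + 2) - 1) ≠ 0 :=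
    mul_ne_zero (mul_ne_zero (mul_ne_zero h3 h4) h1) h2
  rw [div_sub_div _ _ hd1 hd2, div_sub_div _ _ (mul_ne_zero hd1 hd2) hd3,
    div_eq_one_iff_eq (mul_ne_zero (mul_ne_zero hd1 hd2) hd3)]
  ring

private lemma hpoly_mul (α : ℤ) :
    hpoly α * ((X : Polynomial ℚ) ^ 2 - 1) = ((X : Polynomial ℚ) ^ 2) ^ (α.toNat + 1) - 1 := by
  rw [← geom_sum_mul ((X : Polynomial ℚ) ^ 2) (α.toNat + 1)]
  unfold hpoly
  congr 1
  refine Finset.sum_congr rfl fun m _ => ?_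
  rw [pow_mul]

private lemma tQ_pow_sub_one_ne (k : ℕ) (hk : k ≠ 0) : (tQ : RatFunc ℚ) ^ k - 1 ≠ 0 := by
  have hX : (X : Polynomial ℚ) ^ k - 1 ≠ 0 := by
    intro h
    have h2 := congrArg (Polynomial.eval 0) h
    simp [zero_pow hk] at h2
  have e : (tQ : RatFunc ℚ) ^ k - 1 = algebraMap (Polynomial ℚ) (RatFunc ℚ) (X ^ k - 1) := by
    simp [tQ, map_sub, map_pow, map_one, RatFunc.algebraMap_X]
  rw [e]
  intro h
  exact hX (RatFunc.algebraMap_injective ℚ (by simpa using h))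

private lemma tQ_sq_pow_sub_one_ne (k : ℕ) (hk : k ≠ 0) :
    ((tQ : RatFunc ℚ) ^ 2) ^ k - 1 ≠ 0 := by
  rw [← pow_mul]
  exact tQ_pow_sub_one_ne _ (by omega)

private lemma hQ_eq (α : ℤ) :
    hQ α = (((tQ : RatFunc ℚ) ^ 2) ^ (α.toNat + 1) - 1) / ((tQ : RatFunc ℚ) ^ 2 - 1) := by
  rw [eq_div_iff (tQ_pow_sub_one_ne 2 (by norm_num))]
  have e1 : (tQ : RatFunc ℚ) ^ 2 - 1 = algebraMap (Polynomial ℚ) (RatFunc ℚ) (X ^ 2 - 1) := by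
    simp [tQ, map_sub, map_pow, map_one, RatFunc.algebraMap_X]
  have e2 : ((tQ : RatFunc ℚ) ^ 2) ^ (α.toNat + 1) - 1 =
      algebraMap (Polynomial ℚ) (RatFunc ℚ) ((X ^ 2) ^ (α.toNat + 1) - 1) := by
    simp [tQ, map_sub, map_pow, map_one, RatFunc.algebraMap_X]
  rw [e1, e2, hQ, ← map_mul, hpoly_mul]

set_option maxHeartbeats 4000000 in
/-- The reduced identity `FF(i,j,r) = 1`. -/
theorem FFfun_eq_one (i j r : ℤ) (hi : 2 ≤ i) (hj : j ≥ i + 2) (hr : 2 ≤ r) :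
    FFfun i j r = 1 := by
  obtain ⟨p, rfl⟩ : ∃ p : ℕ, i = (p : ℤ) + 2 := ⟨(i - 2).toNat, by omega⟩
  obtain ⟨q, rfl⟩ : ∃ q : ℕ, j = (p : ℤ) + q + 4 := ⟨(j - p - 4).toNat, by omega⟩
  obtain ⟨s, rfl⟩ : ∃ s : ℕ, r = (s : ℤ) + 2 := ⟨(r - 2).toNat, by omega⟩
  unfold FFfun
  simp only [hQ_eq]
  have t1 : ((p : ℤ) + q + 4 - 1).toNat = p + q + 3 := by omega
  have t2 : ((p : ℤ) + q + 4 - 2).toNat = p + q + 2 := by omega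
  have t3 : ((s : ℤ) + 2 + ((p : ℤ) + 2) - 1).toNat = p + s + 3 := by omega
  have t4 : ((s : ℤ) + 2 + ((p : ℤ) + 2) - 2).toNat = p + s + 2 := by omega
  have t5 : ((p : ℤ) + 2 - 1).toNat = p + 1 := by omega
  have t6 : ((p : ℤ) + 2 - 2).toNat = p := by omega
  have t7 : ((s : ℤ) + 2 + ((p : ℤ) + q + 4) - 1).toNat = p + q + s + 5 := by omega
  have t8 : ((s : ℤ) + 2 + ((p : ℤ) + q + 4) - 2).toNat = p + q + s + 4 := by omega
  have t9 : ((s : ℤ) + 2 - 1).toNat = s + 1 := by omega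
  have t10 : ((s : ℤ) + 2 - 2).toNat = s := by omega
  have t11 : ((p : ℤ) + q + 4 - ((p : ℤ) + 2) - 1).toNat = q + 1 := by omega
  have t12 : ((p : ℤ) + q + 4 - ((p : ℤ) + 2) - 2).toNat = q := by omega
  have t13 : ((1 : ℤ)).toNat = 1 := by omega
  have u1 : (2 * ((p : ℤ) + 2 - 1)).toNat = 2 * (p + 1) := by omega
  have u2 : (4 * ((p : ℤ) + 2)).toNat = 2 * (2 * p + 4) := by omega
  rw [t1, t2, t3, t4, t5, t6, t7, t8, t9, t10, t11, t12, t13, u1, u2, pow_mul, pow_mul]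
  have v1 : p + q + 3 + 1 = p + q + 4 := by omega
  have v2 : p + q + 2 + 1 = p + q + 3 := by omega
  have v3 : p + s + 3 + 1 = p + s + 4 := by omega
  have v4 : p + s + 2 + 1 = p + s + 3 := by omega
  have v5 : p + 1 + 1 = p + 2 := by omega
  have v6 : p + q + s + 5 + 1 = p + q + s + 6 := by omega
  have v7 : p + q + s + 4 + 1 = p + q + s + 5 := by omega
  have v8 : s + 1 + 1 = s + 2 := by omega
  have v9 : q + 1 + 1 = q + 2 := by omega
  rw [v1, v2, v3, v4, v5, v6, v7, v8, v9]
  have v10 : (1 : ℕ) + 1 = 2 := rfl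
  rw [v10]
  exact keyM ((tQ : RatFunc ℚ) ^ 2) p q s
    (tQ_pow_sub_one_ne 2 (by norm_num))
    (tQ_sq_pow_sub_one_ne _ (by omega))
    (tQ_sq_pow_sub_one_ne _ (by omega))
    (tQ_sq_pow_sub_one_ne _ (by omega))
    (tQ_sq_pow_sub_one_ne _ (by omega))
end

section
/- Let i, j, r be integers with i ≥ 2, j ≥ i + 2 and r ≥ 3. Define the polynomials H_0 := h_{r+j−3}·h_{j−1}·h_{j−2}·h_{r+i−1}·h_{r+i−2} − h_{r+j−1}·h_{j−1}·h_{j−2}·h_{r+i−2}·h_{r+i−3}, H_1 := t^{2(i−1)}·h_{r+j−1}·h_{r−2}·h_1·h_{j−i−1}·h_{i−1}·h_{r+j−3} − t^{2(i−1)}·h_{r+j−3}·h_{r−1}·h_1·h_{j−i−1}·h_{i−1}·h_{r+j−2}, and H_2 := t^{4i}·h_{r+j−1}·h_{r−3}·h_{r−2}·h_{j−i−2}·h_{j−i−1} − t^{4i}·h_{r+j−3}·h_{r−2}·h_{r−1}·h_{j−i−2}·h_{j−i−1}. Then H_0 + H_1 + H_2 = 0 in ℚ[t]. -/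
open Polynomial

noncomputable def hN (n : ℕ) : Polynomial ℚ :=
  ∑ m ∈ Finset.range (n + 1), X ^ (2 * m)

lemma hpoly_toNat (α : ℤ) : hpoly α = hN α.toNat := rfl

lemma hN_mul (n : ℕ) : hN n * ((X : Polynomial ℚ) ^ 2 - 1) = ((X : Polynomial ℚ) ^ 2) ^ (n + 1) - 1 := by
  simpa [hN, pow_mul] using geom_sum_mul ((X : Polynomial ℚ) ^ 2) (n + 1)

lemma keyNat (a b c : ℕ) :
    (hN (a+b+c+4) * hN (a+b+3) * hN (a+b+2) * hN (a+c+4) * hN (a+c+3)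
      - hN (a+b+c+6) * hN (a+b+3) * hN (a+b+2) * hN (a+c+3) * hN (a+c+2))
    + ((X : Polynomial ℚ) ^ (2*a+2) * hN (a+b+c+6) * hN (c+1) * hN 1 * hN (b+1) * hN (a+1) * hN (a+b+c+4)
      - (X : Polynomial ℚ) ^ (2*a+2) * hN (a+b+c+4) * hN (c+2) * hN 1 * hN (b+1) * hN (a+1) * hN (a+b+c+5))
    + ((X : Polynomial ℚ) ^ (4*a+8) * hN (a+b+c+6) * hN c * hN (c+1) * hN b * hN (b+1)
      - (X : Polynomial ℚ) ^ (4*a+8) * hN (a+b+c+4) * hN (c+1) * hN (c+2) * hN b * hN (b+1)) = 0 := by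
  have hD : ((X : Polynomial ℚ) ^ 2 - 1) ≠ 0 := by
    intro h
    have := congrArg (Polynomial.eval 0) h
    simp at this
  set D : Polynomial ℚ := (X : Polynomial ℚ) ^ 2 - 1 with hDdef
  have hD6 : D ^ 6 ≠ 0 := pow_ne_zero _ hD
  apply mul_left_cancel₀ hD6
  rw [mul_zero]
  have expand :
      D ^ 6 *
      ((hN (a+b+c+4) * hN (a+b+3) * hN (a+b+2) * hN (a+c+4) * hN (a+c+3)
        - hN (a+b+c+6) * hN (a+b+3) * hN (a+b+2) * hN (a+c+3) * hN (a+c+2))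
      + ((X : Polynomial ℚ) ^ (2*a+2) * hN (a+b+c+6) * hN (c+1) * hN 1 * hN (b+1) * hN (a+1) * hN (a+b+c+4)
        - (X : Polynomial ℚ) ^ (2*a+2) * hN (a+b+c+4) * hN (c+2) * hN 1 * hN (b+1) * hN (a+1) * hN (a+b+c+5))
      + ((X : Polynomial ℚ) ^ (4*a+8) * hN (a+b+c+6) * hN c * hN (c+1) * hN b * hN (b+1)
        - (X : Polynomial ℚ) ^ (4*a+8) * hN (a+b+c+4) * hN (c+1) * hN (c+2) * hN b * hN (b+1)))
      =
      D * ((hN (a+b+c+4) * D) * (hN (a+b+3) * D) * (hN (a+b+2) * D) * (hN (a+c+4) * D) * (hN (a+c+3) * D)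
        - (hN (a+b+c+6) * D) * (hN (a+b+3) * D) * (hN (a+b+2) * D) * (hN (a+c+3) * D) * (hN (a+c+2) * D))
      + ((X : Polynomial ℚ) ^ (2*a+2) * (hN (a+b+c+6) * D) * (hN (c+1) * D) * (hN 1 * D) * (hN (b+1) * D) * (hN (a+1) * D) * (hN (a+b+c+4) * D)
        - (X : Polynomial ℚ) ^ (2*a+2) * (hN (a+b+c+4) * D) * (hN (c+2) * D) * (hN 1 * D) * (hN (b+1) * D) * (hN (a+1) * D) * (hN (a+b+c+5) * D))
      + D * ((X : Polynomial ℚ) ^ (4*a+8) * (hN (a+b+c+6) * D) * (hN c * D) * (hN (c+1) * D) * (hN b * D) * (hN (b+1) * D)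
        - (X : Polynomial ℚ) ^ (4*a+8) * (hN (a+b+c+4) * D) * (hN (c+1) * D) * (hN (c+2) * D) * (hN b * D) * (hN (b+1) * D)) := by
    ring
  rw [expand, hDdef]
  simp only [hN_mul]
  ring

/-- `H₀ + H₁ + H₂ = 0`: the cleared-denominator form of the inductive step
`FF(i,j,r) - FF(i,j,r-1) = 0` in the Appendix. -/
theorem H_sum_eq_zero (i j r : ℤ) (hi : 2 ≤ i) (hj : j ≥ i + 2) (hr : 3 ≤ r) :
    (hpoly (r + j - 3) * hpoly (j - 1) * hpoly (j - 2) * hpoly (r + i - 1) *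
        hpoly (r + i - 2) -
      hpoly (r + j - 1) * hpoly (j - 1) * hpoly (j - 2) * hpoly (r + i - 2) *
        hpoly (r + i - 3)) +
    ((X : Polynomial ℚ) ^ (2 * (i - 1)).toNat * hpoly (r + j - 1) *
        hpoly (r - 2) * hpoly 1 * hpoly (j - i - 1) * hpoly (i - 1) *
        hpoly (r + j - 3) -
      X ^ (2 * (i - 1)).toNat * hpoly (r + j - 3) * hpoly (r - 1) * hpoly 1 *
        hpoly (j - i - 1) * hpoly (i - 1) * hpoly (r + j - 2)) +
    ((X : Polynomial ℚ) ^ (4 * i).toNat * hpoly (r + j - 1) * hpoly (r - 3) *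
        hpoly (r - 2) * hpoly (j - i - 2) * hpoly (j - i - 1) -
      X ^ (4 * i).toNat * hpoly (r + j - 3) * hpoly (r - 2) * hpoly (r - 1) *
        hpoly (j - i - 2) * hpoly (j - i - 1)) = 0 := by
  have ha : i = ((i - 2).toNat : ℤ) + 2 := by omega
  have hb : j = ((i - 2).toNat : ℤ) + ((j - i - 2).toNat : ℤ) + 4 := by omega
  have hc : r = ((r - 3).toNat : ℤ) + 3 := by omega
  set a := (i - 2).toNat
  set b := (j - i - 2).toNat
  set c := (r - 3).toNat
  have t1 : (r + j - 3).toNat = a + b + c + 4 := by omega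
  have t2 : (j - 1).toNat = a + b + 3 := by omega
  have t3 : (j - 2).toNat = a + b + 2 := by omega
  have t4 : (r + i - 1).toNat = a + c + 4 := by omega
  have t5 : (r + i - 2).toNat = a + c + 3 := by omega
  have t6 : (r + j - 1).toNat = a + b + c + 6 := by omega
  have t7 : (r + i - 3).toNat = a + c + 2 := by omega
  have t8 : (2 * (i - 1)).toNat = 2 * a + 2 := by omega
  have t9 : (r - 2).toNat = c + 1 := by omega
  have t10 : ((1 : ℤ)).toNat = 1 := by omega
  have t11 : (j - i - 1).toNat = b + 1 := by omega
  have t12 : (i - 1).toNat = a + 1 := by omega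
  have t13 : (r + j - 2).toNat = a + b + c + 5 := by omega
  have t14 : (r - 1).toNat = c + 2 := by omega
  have t15 : (4 * i).toNat = 4 * a + 8 := by omega
  have t16 : (r - 3).toNat = c := by omega
  have t17 : (j - i - 2).toNat = b := by omega
  simp only [hpoly_toNat, t1, t2, t3, t4, t5, t6, t7, t8, t9, t10, t11, t12, t13, t14, t15, t16, t17]
  exact keyNat a b c
end
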